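/- Let ρ_AB be a density matrix on H_A ⊗ H_B (finite-dimensional) with marginals ρ_A, ρ_B, and let M_A, M_B be Hermitian operators on H_A and H_B respectively with M_A ≠ 0 ≠ M_B. Define the truncated correlation C = tr((M_A⊗M_B)·ρ_AB) − tr(M_A·ρ_A)·tr(M_B·ρ_B). Then C² / (2·‖M_A‖²·‖M_B‖²) ≤ I(A:B), where I(A:B) = S(ρ_A) + S(ρ_B) − S(ρ_AB) is the mutual information and ‖·‖ the operator norm. -/

import Mathlib

open scoped Kronecker ComplexOrder Matrix.Norms.L2Operator

/-- Partial trace over the second (B) factor. -/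
noncomputable def ptraceB {m n : ℕ} (ρ : Matrix (Fin m × Fin n) (Fin m × Fin n) ℂ) :
    Matrix (Fin m) (Fin m) ℂ :=
  Matrix.of fun i j => ∑ k, ρ (i, k) (j, k)

/-- Partial trace over the first (A) factor. -/
noncomputable def ptraceA {m n : ℕ} (ρ : Matrix (Fin m × Fin n) (Fin m × Fin n) ℂ) :
    Matrix (Fin n) (Fin n) ℂ :=
  Matrix.of fun i j => ∑ k, ρ (k, i) (k, j)

/-- The von Neumann entropy `S(ρ) = −tr(ρ log ρ)`. -/
noncomputable def vnEntropy {α : Type*} [Fintype α] [DecidableEq α]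
    {ρ : Matrix α α ℂ} (hρ : ρ.IsHermitian) : ℝ :=
  -(ρ * hρ.cfc Real.log).trace.re

open Real

private noncomputable def F (t : ℝ) : ℝ := t * Real.log t - t + 1 - 3*(t-1)^2/(2*(t+2))
private noncomputable def F' (t : ℝ) : ℝ := Real.log t - 3*(t-1)*(t+5)/(2*(t+2)^2)
private noncomputable def F'' (t : ℝ) : ℝ := (t-1)^2*(t+8)/(t*(t+2)^3)

private lemma hasDerivAt_F {t : ℝ} (ht : 0 < t) : HasDerivAt F (F' t) t := by
  have h2 : (2*(t+2)) ≠ 0 := by nlinarith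
  have h1 : HasDerivAt (fun t : ℝ => t * Real.log t) (Real.log t + 1) t :=
    Real.hasDerivAt_mul_log ht.ne'
  have h3 : HasDerivAt (fun t : ℝ => 3*(t-1)^2) (6*(t-1)) t := by
    have := ((hasDerivAt_id t).sub_const 1).pow 2
    have := this.const_mul 3
    convert this using 1 <;> (try rfl) <;> simp [id_eq] <;> ring
  have h4 : HasDerivAt (fun t : ℝ => 2*(t+2)) 2 t := by
    have := ((hasDerivAt_id t).add_const 2).const_mul 2
    convert this using 1 <;> (try rfl) <;> simp [id_eq] <;> ring
  have h5 := h3.div h4 h2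
  have h6 := ((h1.sub (hasDerivAt_id t)).add_const 1).sub h5
  convert h6 using 1 <;> try rfl
  unfold F'
  field_simp
  ring

private lemma hasDerivAt_F' {t : ℝ} (ht : 0 < t) : HasDerivAt F' (F'' t) t := by
  have h2 : (2*(t+2)^2) ≠ 0 := by nlinarith
  have h1 : HasDerivAt Real.log (1/t) t := by
    simpa [one_div] using Real.hasDerivAt_log ht.ne'
  have h3 : HasDerivAt (fun t : ℝ => 3*(t-1)*(t+5)) (3*(t-1) + 3*(t+5)) t := by
    have := (((hasDerivAt_id t).sub_const 1).const_mul 3).mul ((hasDerivAt_id t).add_const 5)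
    convert this using 1 <;> (try rfl) <;> simp [id_eq] <;> ring
  have h4 : HasDerivAt (fun t : ℝ => 2*(t+2)^2) (2*(2*(t+2))) t := by
    have := (((hasDerivAt_id t).add_const 2).pow 2).const_mul 2
    convert this using 1 <;> (try rfl) <;> simp [id_eq] <;> ring
  have h5 := h3.div h4 h2
  have h6 := h1.sub h5
  convert h6 using 1 <;> try rfl
  unfold F''
  have ht' : t ≠ 0 := ht.ne'
  have h7 : t + 2 ≠ 0 := by nlinarith
  field_simp
  ring

private lemma F_nonneg {t : ℝ} (ht : 0 < t) : 0 ≤ F t := by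
  have hF'mono : MonotoneOn F' (Set.Ioi (0:ℝ)) := by
    apply monotoneOn_of_deriv_nonneg (convex_Ioi 0)
    · exact fun x hx => (hasDerivAt_F' hx).continuousAt.continuousWithinAt
    · intro x hx
      rw [interior_Ioi] at hx
      exact (hasDerivAt_F' hx).differentiableAt.differentiableWithinAt
    · intro x hx
      rw [interior_Ioi] at hx
      rw [(hasDerivAt_F' hx).deriv]
      unfold F''
      have hx0 : (0:ℝ) < x := hx
      have h1 : (0:ℝ) ≤ (x-1)^2*(x+8) := by nlinarith [sq_nonneg (x-1)]
      have h2 : (0:ℝ) < x*(x+2)^3 := by positivity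
      exact div_nonneg h1 h2.le
  have hF'1 : F' 1 = 0 := by unfold F'; norm_num
  -- F antitone on Ioc 0 1, monotone on Ici 1
  rcases le_or_gt 1 t with h | h
  · -- t ≥ 1 : F monotone on Ici 1
    have : MonotoneOn F (Set.Ici (1:ℝ)) := by
      apply monotoneOn_of_deriv_nonneg (convex_Ici 1)
      · intro x hx
        exact (hasDerivAt_F (lt_of_lt_of_le one_pos hx)).continuousAt.continuousWithinAt
      · intro x hx
        rw [interior_Ici] at hx
        exact (hasDerivAt_F (lt_trans one_pos hx)).differentiableAt.differentiableWithinAt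
      · intro x hx
        rw [interior_Ici] at hx
        have hx0 : (0:ℝ) < x := lt_trans one_pos hx
        rw [(hasDerivAt_F hx0).deriv]
        rw [← hF'1]
        exact hF'mono (by norm_num) hx0 hx.le
    have := this (Set.self_mem_Ici) h h
    simpa [F] using this
  · -- 0 < t < 1 : F antitone on Ioc 0 1
    have : AntitoneOn F (Set.Ioc (0:ℝ) 1) := by
      apply antitoneOn_of_deriv_nonpos (convex_Ioc 0 1)
      · intro x hx
        exact (hasDerivAt_F hx.1).continuousAt.continuousWithinAt
      · intro x hx
        rw [interior_Ioc] at hx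
        exact (hasDerivAt_F hx.1).differentiableAt.differentiableWithinAt
      · intro x hx
        rw [interior_Ioc] at hx
        rw [(hasDerivAt_F hx.1).deriv]
        rw [← hF'1]
        exact hF'mono hx.1 (by norm_num) hx.2.le
    have := this (Set.mem_Ioc.2 ⟨ht, h.le⟩) (Set.mem_Ioc.2 ⟨one_pos, le_refl 1⟩) h.le
    simpa [F] using this

/-- The key scalar inequality. -/
lemma klein_scalar {x y : ℝ} (hx : 0 < x) (hy : 0 < y) :
    3*(x-y)^2/(2*(x+2*y)) ≤ x * Real.log x - x * Real.log y - x + y := by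
  have ht : 0 < x / y := div_pos hx hy
  have h := F_nonneg ht
  unfold F at h
  have hlog : Real.log (x/y) = Real.log x - Real.log y := Real.log_div hx.ne' hy.ne'
  rw [hlog] at h
  have h2 : 0 ≤ y * (x/y * (Real.log x - Real.log y) - x/y + 1 - 3*(x/y-1)^2/(2*(x/y+2))) :=
    mul_nonneg hy.le h
  have hy' : y ≠ 0 := hy.ne'
  have hxy : x + 2*y > 0 := by linarith
  have key : y * (x/y * (Real.log x - Real.log y) - x/y + 1 - 3*(x/y-1)^2/(2*(x/y+2)))
      = x * Real.log x - x * Real.log y - x + y - 3*(x-y)^2/(2*(x+2*y)) := by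
    field_simp
  rw [key] at h2
  linarith



/-- Core finite-dimensional "quantum Pinsker with observable" inequality, sum form. -/
lemma core_sum {ι : Type*} [Fintype ι] (p q : ι → ℝ) (c b M : ι → ι → ℝ) (K : ℝ)
    (hp : ∀ i, 0 < p i) (hq : ∀ j, 0 < q j)
    (hc : ∀ i j, 0 ≤ c i j) (hb : ∀ i j, 0 ≤ b i j)
    (hcr : ∀ i, ∑ j, c i j = 1) (hcc : ∀ j, ∑ i, c i j = 1)
    (hp1 : ∑ i, p i = 1) (hq1 : ∑ j, q j = 1)
    (hbr : ∀ i, ∑ j, b i j ≤ K^2) (hbc : ∀ j, ∑ i, b i j ≤ K^2)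
    (hM : ∀ i j, (M i j)^2 ≤ c i j * b i j) :
    (∑ i, ∑ j, M i j * (p i - q j))^2 ≤
      2 * K^2 * ((∑ i, p i * Real.log (p i)) - ∑ i, ∑ j, c i j * (p i * Real.log (q j))) := by
  classical
  set D : ℝ := ∑ i, ∑ j, c i j *
      (p i * Real.log (p i) - p i * Real.log (q j) - p i + q j) with hD
  have hK2 : (0:ℝ) ≤ K^2 := sq_nonneg K
  -- RHS inner equals D
  have hDeq : (∑ i, p i * Real.log (p i)) - (∑ i, ∑ j, c i j * (p i * Real.log (q j))) = D := by
    rw [hD]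
    have e1 : ∀ i, ∑ j, c i j *
        (p i * Real.log (p i) - p i * Real.log (q j) - p i + q j)
        = p i * Real.log (p i) - (∑ j, c i j * (p i * Real.log (q j))) - p i
          + ∑ j, c i j * q j := by
      intro i
      simp only [mul_sub, mul_add]
      rw [Finset.sum_add_distrib, Finset.sum_sub_distrib, Finset.sum_sub_distrib,
        ← Finset.sum_mul, hcr i, one_mul, ← Finset.sum_mul, hcr i, one_mul]
    rw [Finset.sum_congr rfl (fun i _ => e1 i)]
    rw [Finset.sum_add_distrib, Finset.sum_sub_distrib, Finset.sum_sub_distrib, hp1]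
    have e2 : ∑ i, ∑ j, c i j * q j = 1 := by
      rw [Finset.sum_comm]
      calc ∑ j, ∑ i, c i j * q j = ∑ j, q j := by
            refine Finset.sum_congr rfl fun j _ => ?_
            rw [← Finset.sum_mul, hcc j, one_mul]
        _ = 1 := hq1
    rw [e2]
    ring
  rw [hDeq]
  -- Cauchy–Schwarz step
  set f : ι × ι → ℝ := fun x => Real.sqrt (3 * c x.1 x.2 / (p x.1 + 2 * q x.2)) * |p x.1 - q x.2|
  set g : ι × ι → ℝ := fun x => Real.sqrt (b x.1 x.2 * (p x.1 + 2 * q x.2) / 3)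
  have hpq : ∀ (i j : ι), (0:ℝ) < p i + 2 * q j := fun i j => by
    have := hp i; have := hq j; linarith
  have habs : |∑ i, ∑ j, M i j * (p i - q j)| ≤ ∑ x : ι × ι, f x * g x := by
    have hrw : ∑ x : ι × ι, f x * g x = ∑ i, ∑ j, f (i,j) * g (i,j) :=
      Fintype.sum_prod_type _
    rw [hrw]
    refine (Finset.abs_sum_le_sum_abs _ _).trans ?_
    refine Finset.sum_le_sum fun i _ => ?_
    refine (Finset.abs_sum_le_sum_abs _ _).trans ?_
    refine Finset.sum_le_sum fun j _ => ?_
    rw [abs_mul]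
    have h1 : |M i j| ≤ Real.sqrt (c i j * b i j) := by
      rw [← Real.sqrt_sq_eq_abs]
      exact Real.sqrt_le_sqrt (hM i j)
    calc |M i j| * |p i - q j| ≤ Real.sqrt (c i j * b i j) * |p i - q j| :=
          mul_le_mul_of_nonneg_right h1 (abs_nonneg _)
      _ = f (i,j) * g (i,j) := by
          simp only [f, g]
          have hs : Real.sqrt (c i j * b i j)
              = Real.sqrt (3 * c i j / (p i + 2 * q j))
                * Real.sqrt (b i j * (p i + 2 * q j) / 3) := by
            rw [← Real.sqrt_mul (by have := hc i j; have := hpq i j; positivity)]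
            congr 1
            have hne : p i + 2 * q j ≠ 0 := (hpq i j).ne'
            field_simp
          rw [hs]; ring
  have hCS := Finset.sum_mul_sq_le_sq_mul_sq Finset.univ f g
  have hf2 : ∑ x : ι × ι, f x ^ 2 ≤ 2 * D := by
    have : ∀ x : ι × ι, f x ^ 2 ≤ 2 * (c x.1 x.2 *
        (p x.1 * Real.log (p x.1) - p x.1 * Real.log (q x.2) - p x.1 + q x.2)) := by
      rintro ⟨i, j⟩
      have h0 : (0:ℝ) ≤ 3 * c i j / (p i + 2 * q j) := by
        have := hc i j; have := hpq i j; positivity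
      have : f (i,j) ^ 2 = 3 * c i j / (p i + 2 * q j) * (p i - q j)^2 := by
        simp only [f, mul_pow, sq_abs, Real.sq_sqrt h0]
      rw [this]
      have hk := klein_scalar (hp i) (hq j)
      have := mul_le_mul_of_nonneg_left hk (hc i j)
      have hne : p i + 2 * q j ≠ 0 := (hpq i j).ne'
      calc 3 * c i j / (p i + 2 * q j) * (p i - q j)^2
          = 2 * (c i j * (3 * (p i - q j)^2 / (2 * (p i + 2 * q j)))) := by
            field_simp
        _ ≤ 2 * (c i j * (p i * Real.log (p i) - p i * Real.log (q j) - p i + q j)) := by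
            have := mul_le_mul_of_nonneg_left hk (hc i j)
            linarith
    calc ∑ x : ι × ι, f x ^ 2 ≤ ∑ x : ι × ι, 2 * (c x.1 x.2 *
        (p x.1 * Real.log (p x.1) - p x.1 * Real.log (q x.2) - p x.1 + q x.2)) :=
          Finset.sum_le_sum fun x _ => this x
      _ = 2 * D := by
          rw [hD, Fintype.sum_prod_type]
          simp_rw [← Finset.mul_sum]
  have hg2 : ∑ x : ι × ι, g x ^ 2 ≤ K^2 := by
    have e : ∀ x : ι × ι, g x ^ 2 = b x.1 x.2 * p x.1 / 3 + 2 * (b x.1 x.2 * q x.2) / 3 := by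
      rintro ⟨i, j⟩
      have h0 : (0:ℝ) ≤ b i j * (p i + 2 * q j) / 3 := by
        have := hb i j; have := hpq i j; positivity
      simp only [g, Real.sq_sqrt h0]
      ring
    rw [Finset.sum_congr rfl (fun x _ => e x), Finset.sum_add_distrib]
    have h1 : ∑ x : ι × ι, b x.1 x.2 * p x.1 / 3 ≤ K^2 / 3 := by
      rw [Fintype.sum_prod_type]
      have : ∀ i, ∑ j, b i j * p i / 3 ≤ p i * K^2 / 3 := by
        intro i
        rw [← Finset.sum_div, ← Finset.sum_mul]
        have := mul_le_mul_of_nonneg_right (hbr i) (hp i).le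
        rw [div_le_div_iff_of_pos_right (by norm_num)]
        linarith
      calc ∑ i, ∑ j, b i j * p i / 3 ≤ ∑ i, p i * K^2 / 3 :=
            Finset.sum_le_sum fun i _ => this i
        _ = K^2 / 3 := by rw [← Finset.sum_div, ← Finset.sum_mul, hp1, one_mul]
    have h2 : ∑ x : ι × ι, 2 * (b x.1 x.2 * q x.2) / 3 ≤ 2 * K^2 / 3 := by
      rw [Fintype.sum_prod_type, Finset.sum_comm]
      have : ∀ j, ∑ i, 2 * (b i j * q j) / 3 ≤ 2 * (q j * K^2) / 3 := by
        intro j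
        rw [← Finset.sum_div, ← Finset.mul_sum]
        have h3 : ∑ i, b i j * q j ≤ K^2 * q j := by
          rw [← Finset.sum_mul]
          exact mul_le_mul_of_nonneg_right (hbc j) (hq j).le
        rw [div_le_div_iff_of_pos_right (by norm_num)]
        nlinarith
      calc ∑ j, ∑ i, 2 * (b i j * q j) / 3 ≤ ∑ j, 2 * (q j * K^2) / 3 :=
            Finset.sum_le_sum fun j _ => this j
        _ = 2 * K^2 / 3 := by
            rw [← Finset.sum_div, ← Finset.mul_sum, ← Finset.sum_mul, hq1, one_mul]
    linarith
  -- combine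
  have hfg : (0:ℝ) ≤ ∑ x : ι × ι, f x * g x := by
    refine Finset.sum_nonneg fun x _ => mul_nonneg ?_ ?_
    · exact mul_nonneg (Real.sqrt_nonneg _) (abs_nonneg _)
    · exact Real.sqrt_nonneg _
  have hsq : (∑ i, ∑ j, M i j * (p i - q j))^2 ≤ (∑ x : ι × ι, f x * g x)^2 := by
    rw [← sq_abs (∑ i, ∑ j, M i j * (p i - q j))]
    exact pow_le_pow_left₀ (abs_nonneg _) habs 2
  have hf2nn : (0:ℝ) ≤ ∑ x : ι × ι, f x ^ 2 :=
    Finset.sum_nonneg fun x _ => sq_nonneg _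
  have hg2nn : (0:ℝ) ≤ ∑ x : ι × ι, g x ^ 2 :=
    Finset.sum_nonneg fun x _ => sq_nonneg _
  calc (∑ i, ∑ j, M i j * (p i - q j))^2 ≤ (∑ x : ι × ι, f x * g x)^2 := hsq
    _ ≤ (∑ x : ι × ι, f x ^ 2) * ∑ x : ι × ι, g x ^ 2 := hCS
    _ ≤ (2 * D) * K^2 := mul_le_mul hf2 hg2 hg2nn (le_trans hf2nn hf2)
    _ = 2 * K^2 * D := by ring



variable {ι : Type*} [Fintype ι] [DecidableEq ι]

lemma trace_diag_sandwich (A B : Matrix ι ι ℂ) (d e : ι → ℂ) :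
    (Matrix.diagonal d * A * Matrix.diagonal e * B).trace
      = ∑ i, ∑ j, d i * e j * (A i j * B j i) := by
  have h : ∀ i j, (Matrix.diagonal d * A * Matrix.diagonal e) i j = d i * A i j * e j := by
    intro i j
    rw [Matrix.mul_diagonal, Matrix.diagonal_mul]
  simp only [Matrix.trace, Matrix.diag, Matrix.mul_apply, h]
  refine Finset.sum_congr rfl fun i _ => Finset.sum_congr rfl fun j _ => ?_
  ring

lemma trace_diag_mul (d : ι → ℂ) (Q : Matrix ι ι ℂ) :
    (Matrix.diagonal d * Q).trace = ∑ i, d i * Q i i := by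
  simp [Matrix.trace, Matrix.diag, Matrix.diagonal_mul]

lemma star_mul_entry (U W : Matrix ι ι ℂ) (i j : ι) :
    (star W * U) j i = star ((star U * W) i j) := by
  simp only [Matrix.mul_apply, Matrix.star_apply, star_sum, star_mul', star_star]
  refine Finset.sum_congr rfl fun k _ => ?_
  ring

/-- trace of `M · UDU*` expanded in two bases. -/
lemma trace_obs_left (U W M : Matrix ι ι ℂ) (hW : W * star W = 1) (d : ι → ℂ) :
    (M * (U * Matrix.diagonal d * star U)).trace
      = ∑ i, ∑ j, d i * ((star U * M * W) i j * star ((star U * W) i j)) := by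
  have h1 : (M * (U * Matrix.diagonal d * star U)).trace
      = (Matrix.diagonal d * (star U * M * U)).trace := by
    rw [Matrix.trace_mul_comm]
    rw [show U * Matrix.diagonal d * star U * M = U * (Matrix.diagonal d * (star U * M))
      from by noncomm_ring]
    rw [Matrix.trace_mul_comm]
    noncomm_ring
  rw [h1]
  have h2 : star U * M * U = (star U * M * W) * (star W * U) := by
    rw [show (star U * M * W) * (star W * U) = star U * M * (W * star W) * U
      from by noncomm_ring, hW, mul_one]
  rw [h2, trace_diag_mul]
  refine Finset.sum_congr rfl fun i _ => ?_
  rw [Matrix.mul_apply, Finset.mul_sum]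
  refine Finset.sum_congr rfl fun j _ => ?_
  rw [star_mul_entry U W i j]

lemma trace_obs_right (U W M : Matrix ι ι ℂ) (hU : U * star U = 1) (e : ι → ℂ) :
    (M * (W * Matrix.diagonal e * star W)).trace
      = ∑ i, ∑ j, e j * ((star U * M * W) i j * star ((star U * W) i j)) := by
  have h1 : (M * (W * Matrix.diagonal e * star W)).trace
      = (Matrix.diagonal e * (star W * M * W)).trace := by
    rw [Matrix.trace_mul_comm]
    rw [show W * Matrix.diagonal e * star W * M = W * (Matrix.diagonal e * (star W * M))
      from by noncomm_ring]
    rw [Matrix.trace_mul_comm]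
    noncomm_ring
  rw [h1]
  have h2 : star W * M * W = (star W * U) * (star U * M * W) := by
    rw [show (star W * U) * (star U * M * W) = star W * (U * star U) * (M * W)
      from by noncomm_ring, hU]
    noncomm_ring
  rw [h2, trace_diag_mul, Finset.sum_comm]
  refine Finset.sum_congr rfl fun j _ => ?_
  rw [Matrix.mul_apply, Finset.mul_sum]
  refine Finset.sum_congr rfl fun i _ => ?_
  rw [star_mul_entry U W i j]
  ring

lemma trace_two_density (U W : Matrix ι ι ℂ) (d e : ι → ℂ) :
    ((U * Matrix.diagonal d * star U) * (W * Matrix.diagonal e * star W)).trace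
      = ∑ i, ∑ j, d i * e j * ((star U * W) i j * star ((star U * W) i j)) := by
  have h1 : (U * Matrix.diagonal d * star U) * (W * Matrix.diagonal e * star W)
      = U * (Matrix.diagonal d * (star U * W) * Matrix.diagonal e * (star W)) := by
    noncomm_ring
  rw [h1, Matrix.trace_mul_comm,
    show Matrix.diagonal d * (star U * W) * Matrix.diagonal e * star W * U
      = Matrix.diagonal d * (star U * W) * Matrix.diagonal e * (star W * U) from by noncomm_ring,
    trace_diag_sandwich]
  refine Finset.sum_congr rfl fun i _ => Finset.sum_congr rfl fun j _ => ?_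
  rw [star_mul_entry U W i j]

lemma trace_self_density (U : Matrix ι ι ℂ) (hU : star U * U = 1) (d e : ι → ℂ) :
    ((U * Matrix.diagonal d * star U) * (U * Matrix.diagonal e * star U)).trace
      = ∑ i, d i * e i := by
  have h1 : (U * Matrix.diagonal d * star U) * (U * Matrix.diagonal e * star U)
      = U * (Matrix.diagonal d * ((star U * U) * (Matrix.diagonal e * star U))) := by
    noncomm_ring
  rw [h1, hU, one_mul, Matrix.trace_mul_comm,
    show Matrix.diagonal d * (Matrix.diagonal e * star U) * U
      = Matrix.diagonal d * Matrix.diagonal e * (star U * U) from by noncomm_ring, hU, mul_one,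
    Matrix.diagonal_mul_diagonal, Matrix.trace_diagonal]



lemma star_kronecker {α β : Type*} [Fintype α] [Fintype β]
    (A : Matrix α α ℂ) (B : Matrix β β ℂ) :
    star (A ⊗ₖ B) = star A ⊗ₖ star B := by
  ext ⟨i, k⟩ ⟨j, l⟩
  simp only [Matrix.star_apply, Matrix.kroneckerMap_apply, star_mul']

lemma trace_ptraceB {m n : ℕ} (ρ : Matrix (Fin m × Fin n) (Fin m × Fin n) ℂ)
    (X : Matrix (Fin m) (Fin m) ℂ) :
    (ρ * (X ⊗ₖ (1 : Matrix (Fin n) (Fin n) ℂ))).trace = (ptraceB ρ * X).trace := by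
  have lhs : (ρ * (X ⊗ₖ (1 : Matrix (Fin n) (Fin n) ℂ))).trace
      = ∑ i, ∑ k, ∑ j, ρ (i,k) (j,k) * X j i := by
    rw [Matrix.trace, Fintype.sum_prod_type]
    refine Finset.sum_congr rfl fun i _ => Finset.sum_congr rfl fun k _ => ?_
    rw [Matrix.diag_apply, Matrix.mul_apply, Fintype.sum_prod_type]
    refine Finset.sum_congr rfl fun j _ => ?_
    simp only [Matrix.kroneckerMap_apply, Matrix.one_apply, mul_ite, mul_one, mul_zero,
      Finset.sum_ite_eq', Finset.mem_univ, if_true]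
  have rhs : (ptraceB ρ * X).trace = ∑ i, ∑ j, (∑ k, ρ (i,k) (j,k)) * X j i := by
    rw [Matrix.trace]
    exact Finset.sum_congr rfl fun i _ => by rw [Matrix.diag_apply, Matrix.mul_apply]; rfl
  rw [lhs, rhs]
  refine Finset.sum_congr rfl fun i _ => ?_
  rw [Finset.sum_comm]
  exact Finset.sum_congr rfl fun j _ => by rw [Finset.sum_mul]

lemma trace_ptraceA {m n : ℕ} (ρ : Matrix (Fin m × Fin n) (Fin m × Fin n) ℂ)
    (Y : Matrix (Fin n) (Fin n) ℂ) :
    (ρ * ((1 : Matrix (Fin m) (Fin m) ℂ) ⊗ₖ Y)).trace = (ptraceA ρ * Y).trace := by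
  have lhs : (ρ * ((1 : Matrix (Fin m) (Fin m) ℂ) ⊗ₖ Y)).trace
      = ∑ k, ∑ i, ∑ l, ρ (k,i) (k,l) * Y l i := by
    rw [Matrix.trace, Fintype.sum_prod_type]
    refine Finset.sum_congr rfl fun k _ => Finset.sum_congr rfl fun i _ => ?_
    rw [Matrix.diag_apply, Matrix.mul_apply, Fintype.sum_prod_type]
    rw [Finset.sum_comm]
    refine Finset.sum_congr rfl fun l _ => ?_
    simp only [Matrix.kroneckerMap_apply, Matrix.one_apply, ite_mul, one_mul, zero_mul,
      mul_ite, mul_zero, Finset.sum_ite_eq', Finset.mem_univ, if_true]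
  have rhs : (ptraceA ρ * Y).trace = ∑ i, ∑ l, (∑ k, ρ (k,i) (k,l)) * Y l i := by
    rw [Matrix.trace]
    exact Finset.sum_congr rfl fun i _ => by rw [Matrix.diag_apply, Matrix.mul_apply]; rfl
  rw [lhs, rhs, Finset.sum_comm]
  refine Finset.sum_congr rfl fun i _ => ?_
  rw [Finset.sum_comm]
  exact Finset.sum_congr rfl fun l _ => by rw [Finset.sum_mul]

lemma trace_ptraceB_eq {m n : ℕ} (ρ : Matrix (Fin m × Fin n) (Fin m × Fin n) ℂ) :
    (ptraceB ρ).trace = ρ.trace := by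
  simp [Matrix.trace, Matrix.diag, ptraceB, Fintype.sum_prod_type]

lemma trace_ptraceA_eq {m n : ℕ} (ρ : Matrix (Fin m × Fin n) (Fin m × Fin n) ℂ) :
    (ptraceA ρ).trace = ρ.trace := by
  rw [Matrix.trace, Matrix.trace]
  simp only [Matrix.diag, ptraceA, Matrix.of_apply, Fintype.sum_prod_type]
  rw [Finset.sum_comm]

-- ℓ² bound for matrix-vector multiplication
lemma mulVec_sq_le {κ ι : Type*} [Fintype κ] [Fintype ι] [DecidableEq κ]
    (A : Matrix ι κ ℂ) (v : κ → ℂ) :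
    ∑ i, ‖A.mulVec v i‖^2 ≤ ‖A‖^2 * ∑ j, ‖v j‖^2 := by
  have h := A.l2_opNorm_mulVec ((WithLp.equiv 2 (κ → ℂ)).symm v)
  have hnn : (0:ℝ) ≤ ‖A‖ := norm_nonneg _
  have h1 : ‖(EuclideanSpace.equiv ι ℂ).symm (A.mulVec ((WithLp.equiv 2 (κ → ℂ)).symm v))‖
      = Real.sqrt (∑ i, ‖A.mulVec v i‖^2) := by
    rw [EuclideanSpace.norm_eq]
    rfl
  have h2 : ‖(WithLp.equiv 2 (κ → ℂ)).symm v‖ = Real.sqrt (∑ j, ‖v j‖^2) := by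
    rw [EuclideanSpace.norm_eq]
    rfl
  rw [h1, h2] at h
  have h3 := mul_self_le_mul_self (Real.sqrt_nonneg _) h
  rw [Real.mul_self_sqrt (Finset.sum_nonneg fun i _ => sq_nonneg _)] at h3
  calc ∑ i, ‖A.mulVec v i‖^2 ≤ (‖A‖ * Real.sqrt (∑ j, ‖v j‖^2)) *
        (‖A‖ * Real.sqrt (∑ j, ‖v j‖^2)) := h3
    _ = ‖A‖^2 * ∑ j, ‖v j‖^2 := by
        rw [mul_mul_mul_comm, Real.mul_self_sqrt (Finset.sum_nonneg fun j _ => sq_nonneg _)]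
        ring

-- Kronecker mulVec bound
lemma kron_mulVec_sq_le {m n : ℕ} (MA : Matrix (Fin m) (Fin m) ℂ)
    (MB : Matrix (Fin n) (Fin n) ℂ) (x : Fin m × Fin n → ℂ) :
    ∑ ik : Fin m × Fin n, ‖(MA ⊗ₖ MB).mulVec x ik‖^2
      ≤ (‖MA‖ * ‖MB‖)^2 * ∑ jl : Fin m × Fin n, ‖x jl‖^2 := by
  set y : Fin m × Fin n → ℂ := fun jk => MB.mulVec (fun l => x (jk.1, l)) jk.2 with hy
  have key : ∀ ik : Fin m × Fin n, (MA ⊗ₖ MB).mulVec x ik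
      = MA.mulVec (fun j => y (j, ik.2)) ik.1 := by
    rintro ⟨i, k⟩
    simp only [Matrix.mulVec, dotProduct, Matrix.kroneckerMap_apply, hy,
      Fintype.sum_prod_type]
    refine Finset.sum_congr rfl fun j _ => ?_
    rw [Finset.mul_sum]
    refine Finset.sum_congr rfl fun l _ => ?_
    ring
  calc ∑ ik : Fin m × Fin n, ‖(MA ⊗ₖ MB).mulVec x ik‖^2
      = ∑ k, ∑ i, ‖MA.mulVec (fun j => y (j, k)) i‖^2 := by
        rw [Fintype.sum_prod_type, Finset.sum_comm]
        exact Finset.sum_congr rfl fun k _ => Finset.sum_congr rfl fun i _ => by rw [key (i,k)]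
    _ ≤ ∑ k, ‖MA‖^2 * ∑ j, ‖y (j, k)‖^2 :=
        Finset.sum_le_sum fun k _ => mulVec_sq_le MA _
    _ = ‖MA‖^2 * ∑ j, ∑ k, ‖MB.mulVec (fun l => x (j, l)) k‖^2 := by
        rw [← Finset.mul_sum, Finset.sum_comm]
    _ ≤ ‖MA‖^2 * ∑ j, ‖MB‖^2 * ∑ l, ‖x (j, l)‖^2 := by
        refine mul_le_mul_of_nonneg_left ?_ (sq_nonneg _)
        exact Finset.sum_le_sum fun j _ => mulVec_sq_le MB _
    _ = (‖MA‖ * ‖MB‖)^2 * ∑ jl : Fin m × Fin n, ‖x jl‖^2 := by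
        rw [← Finset.mul_sum, Fintype.sum_prod_type]
        ring
section MainProof

open Complex

variable {m n : ℕ}

-- positivity of the partial trace
lemma ptraceB_posDef {ρ : Matrix (Fin m × Fin n) (Fin m × Fin n) ℂ} (hρ : ρ.PosDef)
    (hn : Nonempty (Fin n)) (hherm : (ptraceB ρ).IsHermitian) : (ptraceB ρ).PosDef := by
  refine Matrix.PosDef.of_dotProduct_mulVec_pos hherm fun x hx => ?_
  classical
  set y : Fin n → (Fin m × Fin n → ℂ) := fun k jl => if jl.2 = k then x jl.1 else 0 with hy
  have key : dotProduct (star x) ((ptraceB ρ).mulVec x)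
      = ∑ k : Fin n, dotProduct (star (y k)) (ρ.mulVec (y k)) := by
    have hterm : ∀ k, dotProduct (star (y k)) (ρ.mulVec (y k))
        = ∑ i, ∑ j, star (x i) * ρ (i,k) (j,k) * x j := by
      intro k
      have hmv : ∀ il : Fin m × Fin n, ρ.mulVec (y k) il = ∑ j, ρ il (j,k) * x j := by
        intro il
        simp only [Matrix.mulVec, dotProduct, Fintype.sum_prod_type, hy,
          mul_ite, mul_zero, Finset.sum_ite_eq', Finset.mem_univ, if_true]
      simp only [dotProduct, Fintype.sum_prod_type]
      refine Finset.sum_congr rfl fun i _ => ?_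
      have hst : ∀ l, star (y k) (i, l) * ρ.mulVec (y k) (i, l)
          = (if l = k then star (x i) else 0) * ∑ j, ρ (i,l) (j,k) * x j := by
        intro l
        rw [hmv (i,l)]
        congr 1
        simp only [hy, Pi.star_apply]
        split <;> simp
      rw [Finset.sum_congr rfl fun l _ => hst l]
      simp only [ite_mul, zero_mul, Finset.sum_ite_eq', Finset.mem_univ, if_true]
      rw [Finset.mul_sum]
      exact Finset.sum_congr rfl fun j _ => by ring
    have lhs : dotProduct (star x) ((ptraceB ρ).mulVec x)
        = ∑ i, ∑ j, ∑ k, star (x i) * ρ (i,k) (j,k) * x j := by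
      simp only [dotProduct, Matrix.mulVec, ptraceB, Matrix.of_apply, Pi.star_apply,
        Finset.mul_sum, Finset.sum_mul]
      refine Finset.sum_congr rfl fun i _ => Finset.sum_congr rfl fun j _ =>
        Finset.sum_congr rfl fun k _ => by ring
    calc dotProduct (star x) ((ptraceB ρ).mulVec x)
        = ∑ i, ∑ j, ∑ k, star (x i) * ρ (i,k) (j,k) * x j := lhs
      _ = ∑ i, ∑ k, ∑ j, star (x i) * ρ (i,k) (j,k) * x j :=
          Finset.sum_congr rfl fun i _ => Finset.sum_comm
      _ = ∑ k, ∑ i, ∑ j, star (x i) * ρ (i,k) (j,k) * x j := Finset.sum_comm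
      _ = ∑ k, dotProduct (star (y k)) (ρ.mulVec (y k)) :=
          Finset.sum_congr rfl fun k _ => (hterm k).symm
  rw [key]
  refine Finset.sum_pos (fun k _ => hρ.dotProduct_mulVec_pos ?_) Finset.univ_nonempty
  obtain ⟨j, hj⟩ := Function.ne_iff.mp hx
  intro h0
  exact hj (by simpa [hy] using congrFun h0 (j, k))

lemma ptraceA_posDef {ρ : Matrix (Fin m × Fin n) (Fin m × Fin n) ℂ} (hρ : ρ.PosDef)
    (hm : Nonempty (Fin m)) (hherm : (ptraceA ρ).IsHermitian) : (ptraceA ρ).PosDef := by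
  refine Matrix.PosDef.of_dotProduct_mulVec_pos hherm fun x hx => ?_
  classical
  set y : Fin m → (Fin m × Fin n → ℂ) := fun k jl => if jl.1 = k then x jl.2 else 0 with hy
  have key : dotProduct (star x) ((ptraceA ρ).mulVec x)
      = ∑ k : Fin m, dotProduct (star (y k)) (ρ.mulVec (y k)) := by
    have hterm : ∀ k, dotProduct (star (y k)) (ρ.mulVec (y k))
        = ∑ i, ∑ j, star (x i) * ρ (k,i) (k,j) * x j := by
      intro k
      have hmv : ∀ il : Fin m × Fin n, ρ.mulVec (y k) il = ∑ j, ρ il (k,j) * x j := by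
        intro il
        simp only [Matrix.mulVec, dotProduct, Fintype.sum_prod_type, hy,
          mul_ite, mul_zero, Finset.sum_ite_irrel, Finset.sum_const_zero,
          Finset.sum_ite_eq', Finset.mem_univ, if_true]
      simp only [dotProduct, Fintype.sum_prod_type]
      rw [Finset.sum_comm]
      have houter : ∀ l, (if l = k then (1:ℂ) else 0) = (if l = k then 1 else 0) := fun l => rfl
      have hst : ∀ l i, star (y k) (l, i) * ρ.mulVec (y k) (l, i)
          = (if l = k then star (x i) else 0) * ∑ j, ρ (l,i) (k,j) * x j := by
        intro l i
        rw [hmv (l,i)]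
        congr 1
        simp only [hy, Pi.star_apply]
        split <;> simp
      calc ∑ i, ∑ l, star (y k) (l, i) * ρ.mulVec (y k) (l, i)
          = ∑ i, ∑ l, (if l = k then star (x i) else 0) * ∑ j, ρ (l,i) (k,j) * x j :=
            Finset.sum_congr rfl fun i _ => Finset.sum_congr rfl fun l _ => hst l i
        _ = ∑ i, ∑ j, star (x i) * ρ (k,i) (k,j) * x j := by
            refine Finset.sum_congr rfl fun i _ => ?_
            simp only [ite_mul, zero_mul, Finset.sum_ite_eq', Finset.mem_univ, if_true]
            rw [Finset.mul_sum]
            exact Finset.sum_congr rfl fun j _ => by ring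
      done
    have lhs : dotProduct (star x) ((ptraceA ρ).mulVec x)
        = ∑ i, ∑ j, ∑ k, star (x i) * ρ (k,i) (k,j) * x j := by
      simp only [dotProduct, Matrix.mulVec, ptraceA, Matrix.of_apply, Pi.star_apply,
        Finset.mul_sum, Finset.sum_mul]
      refine Finset.sum_congr rfl fun i _ => Finset.sum_congr rfl fun j _ =>
        Finset.sum_congr rfl fun k _ => by ring
    calc dotProduct (star x) ((ptraceA ρ).mulVec x)
        = ∑ i, ∑ j, ∑ k, star (x i) * ρ (k,i) (k,j) * x j := lhs
      _ = ∑ i, ∑ k, ∑ j, star (x i) * ρ (k,i) (k,j) * x j :=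
          Finset.sum_congr rfl fun i _ => Finset.sum_comm
      _ = ∑ k, ∑ i, ∑ j, star (x i) * ρ (k,i) (k,j) * x j := Finset.sum_comm
      _ = ∑ k, dotProduct (star (y k)) (ρ.mulVec (y k)) :=
          Finset.sum_congr rfl fun k _ => (hterm k).symm
  rw [key]
  refine Finset.sum_pos (fun k _ => hρ.dotProduct_mulVec_pos ?_) Finset.univ_nonempty
  obtain ⟨j, hj⟩ := Function.ne_iff.mp hx
  intro h0
  exact hj (by simpa [hy] using congrFun h0 (k, j))

-- sum of eigenvalues equals trace
lemma sum_eigenvalues_eq_trace' {ι : Type*} [Fintype ι] [DecidableEq ι]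
    {ρ : Matrix ι ι ℂ} (h : ρ.IsHermitian) :
    (∑ i, (h.eigenvalues i : ℂ)) = ρ.trace := by
  conv_rhs => rw [h.spectral_theorem, Unitary.conjStarAlgAut_apply]
  rw [Matrix.trace_mul_comm, ← Matrix.mul_assoc,
    Matrix.UnitaryGroup.star_mul_self, Matrix.one_mul, Matrix.trace_diagonal]
  rfl

-- trace of product of two hermitian matrices is real
lemma trace_mul_herm_real {ι : Type*} [Fintype ι] {M ρ : Matrix ι ι ℂ}
    (h1 : M.IsHermitian) (h2 : ρ.IsHermitian) : ((M * ρ).trace).im = 0 := by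
  have h3 : star ((M * ρ).trace) = (M * ρ).trace := by
    rw [← Matrix.trace_conjTranspose, Matrix.conjTranspose_mul, h1.eq, h2.eq,
      Matrix.trace_mul_comm]
  have := Complex.conj_eq_iff_im.mp h3
  exact this

end MainProof
set_option maxHeartbeats 1000000 in
/-- Truncated correlations are controlled by the mutual information:
`C²/(2‖M_A‖²‖M_B‖²) ≤ I(A:B)` where
`C = tr((M_A⊗M_B)ρ_AB) − tr(M_A ρ_A) tr(M_B ρ_B)`. -/
theorem stmt16 {m n : ℕ} (ρAB : Matrix (Fin m × Fin n) (Fin m × Fin n) ℂ)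
    (hρAB : ρAB.PosDef) (htr : ρAB.trace = 1)
    (hA : (ptraceB ρAB).IsHermitian) (hB : (ptraceA ρAB).IsHermitian)
    (MA : Matrix (Fin m) (Fin m) ℂ) (MB : Matrix (Fin n) (Fin n) ℂ)
    (hMA : MA.IsHermitian) (hMB : MB.IsHermitian) (hMA0 : MA ≠ 0) (hMB0 : MB ≠ 0) :
    ((MA ⊗ₖ MB * ρAB).trace.re -
        (MA * ptraceB ρAB).trace.re * (MB * ptraceA ρAB).trace.re) ^ 2 /
        (2 * ‖MA‖ ^ 2 * ‖MB‖ ^ 2) ≤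
      vnEntropy hA + vnEntropy hB - vnEntropy hρAB.1 := by
  classical
  -- nonemptiness
  have hprod : Nonempty (Fin m × Fin n) := by
    by_contra h
    rw [not_nonempty_iff] at h
    rw [Matrix.trace, Finset.univ_eq_empty, Finset.sum_empty] at htr
    exact one_ne_zero htr.symm
  have hmty : Nonempty (Fin m) := ⟨hprod.some.1⟩
  have hnty : Nonempty (Fin n) := ⟨hprod.some.2⟩
  have hρA : (ptraceB ρAB).PosDef := ptraceB_posDef hρAB hnty hA
  have hρB : (ptraceA ρAB).PosDef := ptraceA_posDef hρAB hmty hB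
  have hAB : ρAB.IsHermitian := hρAB.1
  -- eigendata
  set p : Fin m × Fin n → ℝ := hAB.eigenvalues with hpdef
  set a : Fin m → ℝ := hA.eigenvalues with hadef
  set b : Fin n → ℝ := hB.eigenvalues with hbdef
  set U : Matrix (Fin m × Fin n) (Fin m × Fin n) ℂ :=
    (hAB.eigenvectorUnitary : Matrix (Fin m × Fin n) (Fin m × Fin n) ℂ) with hUdef
  set UA : Matrix (Fin m) (Fin m) ℂ := (hA.eigenvectorUnitary : Matrix (Fin m) (Fin m) ℂ)
    with hUAdef
  set UB : Matrix (Fin n) (Fin n) ℂ := (hB.eigenvectorUnitary : Matrix (Fin n) (Fin n) ℂ)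
    with hUBdef
  have hU1 : star U * U = 1 := (hAB.eigenvectorUnitary).2.1
  have hU2 : U * star U = 1 := (hAB.eigenvectorUnitary).2.2
  have hUA1 : star UA * UA = 1 := (hA.eigenvectorUnitary).2.1
  have hUA2 : UA * star UA = 1 := (hA.eigenvectorUnitary).2.2
  have hUB1 : star UB * UB = 1 := (hB.eigenvectorUnitary).2.1
  have hUB2 : UB * star UB = 1 := (hB.eigenvectorUnitary).2.2
  set W : Matrix (Fin m × Fin n) (Fin m × Fin n) ℂ := UA ⊗ₖ UB with hWdef
  have hWstar : star W = star UA ⊗ₖ star UB := star_kronecker UA UB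
  have hW2 : W * star W = 1 := by
    rw [hWdef, hWstar, ← Matrix.mul_kronecker_mul, hUA2, hUB2, Matrix.one_kronecker_one]
  have hW1 : star W * W = 1 := by
    rw [hWdef, hWstar, ← Matrix.mul_kronecker_mul, hUA1, hUB1, Matrix.one_kronecker_one]
  -- positivity of eigenvalues
  have hp : ∀ i, 0 < p i := fun i => hρAB.eigenvalues_pos i
  have ha : ∀ j, 0 < a j := fun j => hρA.eigenvalues_pos j
  have hb : ∀ l, 0 < b l := fun l => hρB.eigenvalues_pos l
  -- sums of eigenvalues
  have hp1 : ∑ i, p i = 1 := by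
    have h := sum_eigenvalues_eq_trace' hAB
    rw [htr] at h
    exact_mod_cast h
  have ha1 : ∑ j, a j = 1 := by
    have h := sum_eigenvalues_eq_trace' hA
    rw [trace_ptraceB_eq, htr] at h
    exact_mod_cast h
  have hb1 : ∑ l, b l = 1 := by
    have h := sum_eigenvalues_eq_trace' hB
    rw [trace_ptraceA_eq, htr] at h
    exact_mod_cast h
  -- main players
  set M : Matrix (Fin m × Fin n) (Fin m × Fin n) ℂ := MA ⊗ₖ MB with hMdef
  have hMH : star M = M := by
    rw [hMdef, star_kronecker, Matrix.star_eq_conjTranspose, Matrix.star_eq_conjTranspose,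
      hMA.eq, hMB.eq]
  set S : Matrix (Fin m × Fin n) (Fin m × Fin n) ℂ := star U * W with hSdef
  set X : Matrix (Fin m × Fin n) (Fin m × Fin n) ℂ := star U * M * W with hXdef
  set q : Fin m × Fin n → ℝ := fun jl => a jl.1 * b jl.2 with hqdef
  have hq : ∀ j, 0 < q j := fun jl => mul_pos (ha jl.1) (hb jl.2)
  have hq1 : ∑ j, q j = 1 := by
    have e : ∑ jl : Fin m × Fin n, q jl = ∑ j, a j * ∑ l, b l := by
      rw [Fintype.sum_prod_type]
      refine Finset.sum_congr rfl fun j _ => ?_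
      rw [Finset.mul_sum]
    rw [e, hb1]
    simp only [mul_one]
    exact ha1
  -- the c, b, m data for core_sum
  set cM : Fin m × Fin n → Fin m × Fin n → ℝ := fun i j => Complex.normSq (S i j) with hcMdef
  set bM : Fin m × Fin n → Fin m × Fin n → ℝ := fun i j => Complex.normSq (X i j) with hbMdef
  set mM : Fin m × Fin n → Fin m × Fin n → ℝ := fun i j => (X i j * star (S i j)).re with hmMdef
  have hcnn : ∀ i j, 0 ≤ cM i j := fun i j => Complex.normSq_nonneg _
  have hbnn : ∀ i j, 0 ≤ bM i j := fun i j => Complex.normSq_nonneg _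
  have hmm : ∀ i j, (mM i j)^2 ≤ cM i j * bM i j := by
    intro i j
    have h1 : (mM i j)^2 ≤ Complex.normSq (X i j * star (S i j)) := by
      rw [hmMdef, Complex.normSq_apply]
      nlinarith [sq_nonneg (X i j * star (S i j)).im]
    rw [Complex.normSq_mul, Complex.star_def, Complex.normSq_conj] at h1
    rw [hcMdef, hbMdef]
    calc (mM i j)^2 ≤ Complex.normSq (X i j) * Complex.normSq (S i j) := h1
      _ = Complex.normSq (S i j) * Complex.normSq (X i j) := mul_comm _ _
  -- unitarity of S and row/col sums of cM
  have hSS2 : S * star S = 1 := by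
    rw [hSdef, StarMul.star_mul, star_star,
      show star U * W * (star W * U) = star U * (W * star W) * U from by noncomm_ring,
      hW2, mul_one, hU1]
  have hSS1 : star S * S = 1 := by
    rw [hSdef, StarMul.star_mul, star_star,
      show star W * U * (star U * W) = star W * (U * star U) * W from by noncomm_ring,
      hU2, mul_one, hW1]
  have row_normSq : ∀ (Y : Matrix (Fin m × Fin n) (Fin m × Fin n) ℂ) (i : Fin m × Fin n),
      ∑ j, (Complex.normSq (Y i j) : ℂ) = (Y * star Y) i i := by
    intro Y i
    rw [Matrix.mul_apply]
    refine Finset.sum_congr rfl fun j _ => ?_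
    rw [Matrix.star_apply, Complex.star_def, Complex.mul_conj]
  have col_normSq : ∀ (Y : Matrix (Fin m × Fin n) (Fin m × Fin n) ℂ) (j : Fin m × Fin n),
      ∑ i, (Complex.normSq (Y i j) : ℂ) = (star Y * Y) j j := by
    intro Y j
    rw [Matrix.mul_apply]
    refine Finset.sum_congr rfl fun i _ => ?_
    rw [Matrix.star_apply, Complex.star_def]
    exact Complex.normSq_eq_conj_mul_self
  have hcr : ∀ i, ∑ j, cM i j = 1 := by
    intro i
    have h1 := row_normSq S i
    rw [hSS2, Matrix.one_apply_eq] at h1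
    exact_mod_cast h1
  have hcc : ∀ j, ∑ i, cM i j = 1 := by
    intro j
    have h1 := col_normSq S j
    rw [hSS1, Matrix.one_apply_eq] at h1
    exact_mod_cast h1
  have normSq_norm : ∀ z : ℂ, Complex.normSq z = ‖z‖^2 := fun z => by
    rw [Complex.normSq_eq_norm_sq]
  have hXstar : star X = star W * M * U := by
    rw [hXdef, StarMul.star_mul, StarMul.star_mul, star_star, hMH]
    noncomm_ring
  -- row bound
  have hbr : ∀ i, ∑ j, bM i j ≤ (‖MA‖ * ‖MB‖)^2 := by
    intro i
    have hXX : X * star X = star (M * U) * (M * U) := by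
      have e1 : star (M * U) * (M * U) = star U * M * (M * U) := by
        rw [StarMul.star_mul, hMH]
      rw [e1, hXstar, hXdef]
      calc star U * M * W * (star W * M * U)
          = star U * M * (W * star W) * (M * U) := by noncomm_ring
        _ = star U * M * (M * U) := by rw [hW2, mul_one]
    have h1 : ∑ j, (Complex.normSq (X i j) : ℂ)
        = ∑ k, (Complex.normSq ((M * U) k i) : ℂ) := by
      rw [row_normSq X i, col_normSq (M * U) i, hXX]
    have h1' : ∑ j, Complex.normSq (X i j) = ∑ k, Complex.normSq ((M * U) k i) := by
      exact_mod_cast h1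
    have hcol1 : ∑ l, Complex.normSq (U l i) = 1 := by
      have h := col_normSq U i
      rw [hU1, Matrix.one_apply_eq] at h
      exact_mod_cast h
    have e : ∀ k, (M * U) k i = (M.mulVec (fun l => U l i)) k := by
      intro k
      rw [Matrix.mul_apply]
      rfl
    calc ∑ j, bM i j = ∑ k, Complex.normSq ((M * U) k i) := h1'
      _ = ∑ k, ‖(MA ⊗ₖ MB).mulVec (fun l => U l i) k‖^2 := by
          refine Finset.sum_congr rfl fun k _ => ?_
          rw [e k, normSq_norm, hMdef]
      _ ≤ (‖MA‖ * ‖MB‖)^2 * ∑ l, ‖U l i‖^2 := kron_mulVec_sq_le MA MB _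
      _ = (‖MA‖ * ‖MB‖)^2 := by
          rw [show ∑ l, ‖U l i‖^2 = ∑ l, Complex.normSq (U l i) from
            Finset.sum_congr rfl fun l _ => (normSq_norm _).symm, hcol1, mul_one]
  -- column bound
  have hbc : ∀ j, ∑ i, bM i j ≤ (‖MA‖ * ‖MB‖)^2 := by
    intro j
    have hXX : star X * X = star (M * W) * (M * W) := by
      have e1 : star (M * W) * (M * W) = star W * M * (M * W) := by
        rw [StarMul.star_mul, hMH]
      rw [e1, hXstar, hXdef]
      calc star W * M * U * (star U * M * W)
          = star W * M * (U * star U) * (M * W) := by noncomm_ring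
        _ = star W * M * (M * W) := by rw [hU2, mul_one]
    have h1 : ∑ i, (Complex.normSq (X i j) : ℂ)
        = ∑ k, (Complex.normSq ((M * W) k j) : ℂ) := by
      rw [col_normSq X j, col_normSq (M * W) j, hXX]
    have h1' : ∑ i, Complex.normSq (X i j) = ∑ k, Complex.normSq ((M * W) k j) := by
      exact_mod_cast h1
    have hcol1 : ∑ l, Complex.normSq (W l j) = 1 := by
      have h := col_normSq W j
      rw [hW1, Matrix.one_apply_eq] at h
      exact_mod_cast h
    have e : ∀ k, (M * W) k j = (M.mulVec (fun l => W l j)) k := by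
      intro k
      rw [Matrix.mul_apply]
      rfl
    calc ∑ i, bM i j = ∑ k, Complex.normSq ((M * W) k j) := h1'
      _ = ∑ k, ‖(MA ⊗ₖ MB).mulVec (fun l => W l j) k‖^2 := by
          refine Finset.sum_congr rfl fun k _ => ?_
          rw [e k, normSq_norm, hMdef]
      _ ≤ (‖MA‖ * ‖MB‖)^2 * ∑ l, ‖W l j‖^2 := kron_mulVec_sq_le MA MB _
      _ = (‖MA‖ * ‖MB‖)^2 := by
          rw [show ∑ l, ‖W l j‖^2 = ∑ l, Complex.normSq (W l j) from
            Finset.sum_congr rfl fun l _ => (normSq_norm _).symm, hcol1, mul_one]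
  -- spectral forms
  have hspec : ρAB = U * Matrix.diagonal (fun i => (p i : ℂ)) * star U := hAB.spectral_theorem
  have hspecA : ptraceB ρAB = UA * Matrix.diagonal (fun j => (a j : ℂ)) * star UA :=
    hA.spectral_theorem
  have hspecB : ptraceA ρAB = UB * Matrix.diagonal (fun l => (b l : ℂ)) * star UB :=
    hB.spectral_theorem
  have hcfcAB : hρAB.1.cfc Real.log
      = U * Matrix.diagonal (fun i => ((Real.log (p i) : ℝ) : ℂ)) * star U := rfl
  have hcfcA : hA.cfc Real.log
      = UA * Matrix.diagonal (fun j => ((Real.log (a j) : ℝ) : ℂ)) * star UA := rfl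
  have hcfcB : hB.cfc Real.log
      = UB * Matrix.diagonal (fun l => ((Real.log (b l) : ℝ) : ℂ)) * star UB := rfl
  -- entropy values
  have hSAB : vnEntropy hρAB.1 = -∑ i, p i * Real.log (p i) := by
    unfold vnEntropy
    congr 1
    rw [hcfcAB]
    conv_lhs => rw [hspec]
    rw [trace_self_density U hU1]
    rw [show (∑ i, ((p i : ℂ) * ((Real.log (p i) : ℝ) : ℂ)))
        = ((∑ i, p i * Real.log (p i) : ℝ) : ℂ) from by push_cast; rfl]
    rw [Complex.ofReal_re]
  have hSA : vnEntropy hA = -∑ j, a j * Real.log (a j) := by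
    unfold vnEntropy
    congr 1
    rw [hcfcA]
    conv_lhs => rw [hspecA]
    rw [trace_self_density UA hUA1]
    rw [show (∑ j, ((a j : ℂ) * ((Real.log (a j) : ℝ) : ℂ)))
        = ((∑ j, a j * Real.log (a j) : ℝ) : ℂ) from by push_cast; rfl]
    rw [Complex.ofReal_re]
  have hSB : vnEntropy hB = -∑ l, b l * Real.log (b l) := by
    unfold vnEntropy
    congr 1
    rw [hcfcB]
    conv_lhs => rw [hspecB]
    rw [trace_self_density UB hUB1]
    rw [show (∑ l, ((b l : ℂ) * ((Real.log (b l) : ℝ) : ℂ)))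
        = ((∑ l, b l * Real.log (b l) : ℝ) : ℂ) from by push_cast; rfl]
    rw [Complex.ofReal_re]
  -- trace identities for the correlation
  have hT1 : (M * ρAB).trace = ∑ i, ∑ j, (p i : ℂ) * (X i j * star (S i j)) := by
    conv_lhs => rw [hspec]
    exact trace_obs_left U W M hW2 _
  have hE1 : ptraceB ρAB ⊗ₖ ptraceA ρAB
      = W * Matrix.diagonal (fun jl : Fin m × Fin n => (a jl.1 : ℂ) * (b jl.2 : ℂ)) * star W := by
    conv_lhs => rw [hspecA, hspecB]
    rw [Matrix.mul_kronecker_mul, Matrix.mul_kronecker_mul,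
      Matrix.diagonal_kronecker_diagonal, ← hWstar, ← hWdef]
  have hT2 : (MA * ptraceB ρAB).trace * (MB * ptraceA ρAB).trace
      = ∑ i, ∑ j, ((a j.1 : ℂ) * (b j.2 : ℂ)) * (X i j * star (S i j)) := by
    rw [← Matrix.trace_kronecker, Matrix.mul_kronecker_mul, hE1, ← hMdef]
    exact trace_obs_right U W M hU2 _
  have hCre : (M * ρAB).trace.re
        - (MA * ptraceB ρAB).trace.re * (MB * ptraceA ρAB).trace.re
      = ∑ i, ∑ j, mM i j * (p i - q j) := by
    have him : ((MA * ptraceB ρAB).trace).im = 0 := trace_mul_herm_real hMA hA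
    have hprodre : (MA * ptraceB ρAB).trace.re * (MB * ptraceA ρAB).trace.re
        = ((MA * ptraceB ρAB).trace * (MB * ptraceA ρAB).trace).re := by
      rw [Complex.mul_re, him, zero_mul, sub_zero]
    rw [hprodre, hT1, hT2, Complex.re_sum, Complex.re_sum, ← Finset.sum_sub_distrib]
    refine Finset.sum_congr rfl fun i _ => ?_
    rw [Complex.re_sum, Complex.re_sum, ← Finset.sum_sub_distrib]
    refine Finset.sum_congr rfl fun j _ => ?_
    rw [show ((a j.1 : ℂ) * (b j.2 : ℂ)) = ((q j : ℝ) : ℂ) from by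
      simp only [hqdef]; push_cast; rfl]
    rw [Complex.re_ofReal_mul, Complex.re_ofReal_mul]
    simp only [hmMdef]
    ring
  -- the cross-entropy identity
  set lq : Fin m × Fin n → ℂ := fun jl => ((Real.log (a jl.1) + Real.log (b jl.2) : ℝ) : ℂ)
    with hlqdef
  have hLmat : W * Matrix.diagonal lq * star W
      = (hA.cfc Real.log) ⊗ₖ (1 : Matrix (Fin n) (Fin n) ℂ)
        + (1 : Matrix (Fin m) (Fin m) ℂ) ⊗ₖ (hB.cfc Real.log) := by
    have hd : Matrix.diagonal lq
        = Matrix.diagonal (fun jl : Fin m × Fin n => ((Real.log (a jl.1) : ℝ) : ℂ))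
          + Matrix.diagonal (fun jl : Fin m × Fin n => ((Real.log (b jl.2) : ℝ) : ℂ)) := by
      rw [Matrix.diagonal_add]
      refine congrArg _ (funext fun jl => ?_)
      simp only [hlqdef]
      push_cast
      rfl
    have e1 : W * Matrix.diagonal (fun jl : Fin m × Fin n => ((Real.log (a jl.1) : ℝ) : ℂ))
        * star W = (hA.cfc Real.log) ⊗ₖ (1 : Matrix (Fin n) (Fin n) ℂ) := by
      have h1 : Matrix.diagonal (fun jl : Fin m × Fin n => ((Real.log (a jl.1) : ℝ) : ℂ))
          = (Matrix.diagonal fun j => ((Real.log (a j) : ℝ) : ℂ))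
            ⊗ₖ (1 : Matrix (Fin n) (Fin n) ℂ) := by
        rw [← Matrix.diagonal_one, Matrix.diagonal_kronecker_diagonal]
        refine congrArg _ (funext fun jl => ?_)
        rw [mul_one]
      rw [h1, hWstar, hWdef, ← Matrix.mul_kronecker_mul, ← Matrix.mul_kronecker_mul,
        Matrix.mul_one, hUB2, hcfcA]
    have e2 : W * Matrix.diagonal (fun jl : Fin m × Fin n => ((Real.log (b jl.2) : ℝ) : ℂ))
        * star W = (1 : Matrix (Fin m) (Fin m) ℂ) ⊗ₖ (hB.cfc Real.log) := by
      have h1 : Matrix.diagonal (fun jl : Fin m × Fin n => ((Real.log (b jl.2) : ℝ) : ℂ))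
          = (1 : Matrix (Fin m) (Fin m) ℂ)
            ⊗ₖ (Matrix.diagonal fun l => ((Real.log (b l) : ℝ) : ℂ)) := by
        rw [← Matrix.diagonal_one, Matrix.diagonal_kronecker_diagonal]
        refine congrArg _ (funext fun jl => ?_)
        rw [one_mul]
      rw [h1, hWstar, hWdef, ← Matrix.mul_kronecker_mul, ← Matrix.mul_kronecker_mul,
        Matrix.mul_one, hUA2, hcfcB]
    rw [hd, Matrix.mul_add, Matrix.add_mul, e1, e2]
  have hT3 : (ρAB * (W * Matrix.diagonal lq * star W)).trace
      = ∑ i, ∑ j, (p i : ℂ) * lq j * (S i j * star (S i j)) := by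
    conv_lhs => rw [hspec]
    exact trace_two_density U W _ lq
  have hT4 : (ρAB * (W * Matrix.diagonal lq * star W)).trace
      = (∑ j, (a j : ℂ) * ((Real.log (a j) : ℝ) : ℂ))
        + ∑ l, (b l : ℂ) * ((Real.log (b l) : ℝ) : ℂ) := by
    rw [hLmat, Matrix.mul_add, Matrix.trace_add, trace_ptraceB, trace_ptraceA]
    congr 1
    · rw [hcfcA]
      conv_lhs => rw [hspecA]
      exact trace_self_density UA hUA1 _ _
    · rw [hcfcB]
      conv_lhs => rw [hspecB]
      exact trace_self_density UB hUB1 _ _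
  have hcross : ∑ i, ∑ j, cM i j * (p i * Real.log (q j))
      = (∑ j, a j * Real.log (a j)) + ∑ l, b l * Real.log (b l) := by
    have hcomplex := hT3.symm.trans hT4
    have hL : ∑ i, ∑ j, (p i : ℂ) * lq j * (S i j * star (S i j))
        = ((∑ i, ∑ j, cM i j * (p i * Real.log (q j)) : ℝ) : ℂ) := by
      push_cast
      refine Finset.sum_congr rfl fun i _ => Finset.sum_congr rfl fun j _ => ?_
      rw [Complex.star_def, Complex.mul_conj]
      simp only [hcMdef, hlqdef, hqdef]
      rw [Real.log_mul (ha j.1).ne' (hb j.2).ne']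
      push_cast
      ring
    have hR : ((∑ j, (a j : ℂ) * ((Real.log (a j) : ℝ) : ℂ))
          + ∑ l, (b l : ℂ) * ((Real.log (b l) : ℝ) : ℂ))
        = (((∑ j, a j * Real.log (a j)) + ∑ l, b l * Real.log (b l) : ℝ) : ℂ) := by
      push_cast
      rfl
    rw [hL, hR] at hcomplex
    exact_mod_cast hcomplex
  -- final assembly
  have hRHS : vnEntropy hA + vnEntropy hB - vnEntropy hρAB.1
      = (∑ i, p i * Real.log (p i)) - ∑ i, ∑ j, cM i j * (p i * Real.log (q j)) := by
    rw [hSA, hSB, hSAB, hcross]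
    ring
  have core := core_sum p q cM bM mM (‖MA‖ * ‖MB‖) hp hq hcnn hbnn hcr hcc hp1 hq1 hbr hbc hmm
  rw [hRHS, hCre]
  have h1 : (0:ℝ) < ‖MA‖ := norm_pos_iff.mpr hMA0
  have h2 : (0:ℝ) < ‖MB‖ := norm_pos_iff.mpr hMB0
  have hden : (0:ℝ) < 2 * ‖MA‖^2 * ‖MB‖^2 := by positivity
  rw [div_le_iff₀ hden]
  exact core.trans (le_of_eq (by ring))
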